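/- Radial equality case in exponential integrability: let α : (0,1) → [0,1] be measurable with ∫₀¹ (1−α(t))/t dt = ∞, and define μ(z) = −(z/z̄)α(|z|) for |z| < 1, μ = 0 for |z| ≥ 1. Then with Sμ(z) = 2∫_{|z|}^1 α(t)/t dt − α(|z|) for |z| < 1, one has ∫_𝔻 (1−|μ(z)|)·e^{|μ(z)| + Re Sμ(z)} dz = π. -/

import Mathlib

open MeasureTheory Complex Set


lemma lint_norm_complex (f : ℝ → ENNReal) (hf : Measurable f) :
    ∫⁻ z : ℂ, f ‖z‖ = 2 * (NNReal.pi : ENNReal) * ∫⁻ y in Ioi (0:ℝ), ENNReal.ofReal y * f y := by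
  have h1 : ∫⁻ z : ℂ, f ‖z‖
      = ∫⁻ x : ({(0:ℂ)}ᶜ : Set ℂ), f ‖x.1‖ ∂(Measure.comap Subtype.val volume) := by
    rw [lintegral_subtype_comap (measurableSet_singleton (0:ℂ)).compl fun x ↦ f ‖x‖,
      MeasureTheory.restrict_compl_singleton]
  have h2 := (Measure.measurePreserving_homeomorphUnitSphereProd (volume : Measure ℂ)).lintegral_comp
    (f := fun p : (Metric.sphere (0:ℂ) 1) × (Ioi (0:ℝ)) => f p.2)
    ((hf.comp measurable_subtype_coe).comp measurable_snd)
  have h4 : ∫⁻ x : ({(0:ℂ)}ᶜ : Set ℂ), f ‖x.1‖ ∂(Measure.comap Subtype.val volume)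
      = ∫⁻ x : ({(0:ℂ)}ᶜ : Set ℂ),
          (fun p : (Metric.sphere (0:ℂ) 1) × (Ioi (0:ℝ)) => f p.2) (homeomorphUnitSphereProd ℂ x)
          ∂(Measure.comap Subtype.val volume) := by
    apply lintegral_congr; intro x; simp [homeomorphUnitSphereProd_apply_snd_coe]
  rw [h1, h4, h2]
  rw [MeasureTheory.lintegral_prod (fun p : (Metric.sphere (0:ℂ) 1) × (Ioi (0:ℝ)) => f p.2)
    (((hf.comp measurable_subtype_coe).comp measurable_snd).aemeasurable)]
  rw [show (∫⁻ (x : (Metric.sphere (0:ℂ) 1)), ∫⁻ (y : (Ioi (0:ℝ))), f ↑(x, y).2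
        ∂Measure.volumeIoiPow (Module.finrank ℝ ℂ - 1) ∂(volume : Measure ℂ).toSphere)
      = ∫⁻ (_ : (Metric.sphere (0:ℂ) 1)), ∫⁻ (y : (Ioi (0:ℝ))), f ↑y
        ∂Measure.volumeIoiPow (Module.finrank ℝ ℂ - 1) ∂(volume : Measure ℂ).toSphere from
    lintegral_congr fun x => rfl]
  rw [lintegral_const]
  have hio : ∫⁻ (b : (Ioi (0:ℝ))), f b ∂(Measure.volumeIoiPow (Module.finrank ℝ ℂ - 1))
      = ∫⁻ y in Ioi (0:ℝ), ENNReal.ofReal y * f y := by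
    rw [Measure.volumeIoiPow,
      lintegral_withDensity_eq_lintegral_mul _
        (f := fun r : (Ioi (0:ℝ)) => ENNReal.ofReal (r.1 ^ (Module.finrank ℝ ℂ - 1)))
        ((measurable_subtype_coe.pow_const _).ennreal_ofReal)
        (g := fun b : (Ioi (0:ℝ)) => f b.1) (hf.comp measurable_subtype_coe),
      Complex.finrank_real_complex]
    simp only [Pi.mul_apply, show (2-1:ℕ)=1 from rfl, pow_one]
    exact lintegral_subtype_comap measurableSet_Ioi fun y => ENNReal.ofReal y * f y
  rw [hio, Measure.toSphere_apply_univ, Complex.finrank_real_complex, Complex.volume_ball]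
  rw [ENNReal.ofReal_one, one_pow, one_mul, mul_comm]
  norm_num
open MeasureTheory Set

lemma hazard_identity (W : ℝ → ENNReal) (hW : Measurable W)
    (hWle : ∀ t ∈ Ioo (0:ℝ) 1, W t ≤ ENNReal.ofReal (2 / t))
    (hdiv : ∫⁻ t in Ioo (0:ℝ) 1, W t = ⊤) :
    ∫⁻ r in Ioo (0:ℝ) 1,
      W r * ENNReal.ofReal (Real.exp (-(∫⁻ t in Ioo r 1, W t).toReal)) = 1 := by
  set Hl : ℝ → ENNReal := fun r => ∫⁻ t in Ioo r 1, W t with hHl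
  set H : ℝ → ℝ := fun r => (Hl r).toReal with hH
  have hHlanti : Antitone Hl := fun a b hab =>
    lintegral_mono_set (Ioo_subset_Ioo hab le_rfl)
  have hHlmeas : Measurable Hl := hHlanti.measurable
  have hHmeas : Measurable H := hHlmeas.ennreal_toReal
  -- finiteness
  have hbound : ∀ r ∈ Ioo (0:ℝ) 1, Hl r ≤ ENNReal.ofReal (2 / r * (1 - r)) := by
    intro r hr
    calc Hl r ≤ ∫⁻ _ in Ioo r 1, ENNReal.ofReal (2 / r) := by
          apply setLIntegral_mono measurable_const
          intro t ht
          refine le_trans (hWle t ⟨lt_trans hr.1 ht.1, ht.2⟩) ?_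
          exact ENNReal.ofReal_le_ofReal
            (div_le_div_of_nonneg_left (by norm_num) hr.1 ht.1.le)
      _ = ENNReal.ofReal (2 / r) * volume (Ioo r 1) := setLIntegral_const _ _
      _ = ENNReal.ofReal (2 / r * (1 - r)) := by
          rw [Real.volume_Ioo, ENNReal.ofReal_mul (div_nonneg (by norm_num) hr.1.le)]
  have hfin : ∀ r ∈ Ioo (0:ℝ) 1, Hl r ≠ ⊤ := fun r hr =>
    ne_top_of_le_ne_top ENNReal.ofReal_ne_top (hbound r hr)
  have hsplit : ∀ a b : ℝ, 0 < a → a ≤ b → b < 1 →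
      Hl a = (∫⁻ t in Ioc a b, W t) + Hl b := by
    intro a b ha hab hb
    have : Ioo a 1 = Ioc a b ∪ Ioo b 1 := (Ioc_union_Ioo_eq_Ioo hab hb).symm
    rw [hHl]; simp only
    rw [this, lintegral_union measurableSet_Ioo
      (disjoint_left.mpr fun x hx hx' => absurd hx'.1 (not_lt.mpr hx.2))]
  have hIoc : ∀ a b : ℝ, 0 < a → a ≤ b → b < 1 →
      (∫⁻ t in Ioc a b, W t) ≤ ENNReal.ofReal (2 / a * (b - a)) := by
    intro a b ha hab hb
    calc (∫⁻ t in Ioc a b, W t) ≤ ∫⁻ _ in Ioc a b, ENNReal.ofReal (2 / a) := by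
          apply setLIntegral_mono measurable_const
          intro t ht
          refine le_trans (hWle t ⟨lt_trans ha ht.1, lt_of_le_of_lt ht.2 hb⟩) ?_
          exact ENNReal.ofReal_le_ofReal
            (div_le_div_of_nonneg_left (by norm_num) ha ht.1.le)
      _ = ENNReal.ofReal (2 / a) * volume (Ioc a b) := setLIntegral_const _ _
      _ = ENNReal.ofReal (2 / a * (b - a)) := by
          rw [Real.volume_Ioc, ENNReal.ofReal_mul (div_nonneg (by norm_num) ha.le)]
  have hLip : ∀ a b : ℝ, 0 < a → a ≤ b → b < 1 → H a ≤ H b + 2 / a * (b - a) := by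
    intro a b ha hab hb
    have hbΙ : b ∈ Ioo (0:ℝ) 1 := ⟨lt_of_lt_of_le ha hab, hb⟩
    have h1 : Hl a ≤ ENNReal.ofReal (2 / a * (b - a)) + Hl b := by
      rw [hsplit a b ha hab hb]
      exact add_le_add_left (hIoc a b ha hab hb) _
    have h2 : ENNReal.ofReal (2 / a * (b - a)) + Hl b ≠ ⊤ :=
      ENNReal.add_ne_top.mpr ⟨ENNReal.ofReal_ne_top, hfin b hbΙ⟩
    have := ENNReal.toReal_mono h2 h1
    rw [ENNReal.toReal_add ENNReal.ofReal_ne_top (hfin b hbΙ),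
      ENNReal.toReal_ofReal (mul_nonneg (div_nonneg (by norm_num) ha.le) (by linarith))] at this
    linarith [this]
  have hanti : ∀ a b : ℝ, 0 < a → a ≤ b → b < 1 → H b ≤ H a := by
    intro a b ha hab hb
    exact ENNReal.toReal_mono (hfin a ⟨ha, lt_of_le_of_lt hab hb⟩) (hHlanti hab)
  have hH0 : ∀ r, 0 ≤ H r := fun r => ENNReal.toReal_nonneg
  -- key value lemma
  have keyval : ∀ u : ℝ, 0 < u →
      ∫⁻ r in {r | H r < u} ∩ Ioo (0:ℝ) 1, W r = ENNReal.ofReal u := by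
    intro u hu
    -- b near 1 with H b < u
    obtain ⟨b, hbΙ, hbu⟩ : ∃ b ∈ Ioo (0:ℝ) 1, H b < u := by
      refine ⟨max (1/2) (1 - u/8), ⟨lt_of_lt_of_le (by norm_num) (le_max_left _ _),
        max_lt (by norm_num) (by linarith)⟩, ?_⟩
      set b := max (1/2) (1 - u/8) with hbdef
      have hb2 : (1/2 : ℝ) ≤ b := le_max_left _ _
      have hbu8 : 1 - u/8 ≤ b := le_max_right _ _
      have hb1 : b < 1 := max_lt (by norm_num) (by linarith)
      have h1 : H b ≤ 2 / b * (1 - b) := by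
        have := ENNReal.toReal_mono ENNReal.ofReal_ne_top
          (hbound b ⟨lt_of_lt_of_le (by norm_num) hb2, hb1⟩)
        rwa [ENNReal.toReal_ofReal
          (mul_nonneg (div_nonneg (by norm_num) (by linarith)) (by linarith))] at this
      have h2 : 2 / b ≤ 4 := by
        rw [div_le_iff₀ (by linarith)]; linarith
      have h3 : 1 - b ≤ u / 8 := by linarith
      calc H b ≤ 2 / b * (1 - b) := h1
        _ ≤ 4 * (u/8) := by
            apply mul_le_mul h2 h3 (by linarith) (by norm_num)
        _ < u := by linarith
    -- a near 0 with u ≤ H a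
    obtain ⟨a, haΙ, hau⟩ : ∃ a ∈ Ioo (0:ℝ) 1, u ≤ H a := by
      have hnu : ∀ n : ℕ, volume.withDensity W (Ioo (1/(n+2) : ℝ) 1) = Hl (1/(n+2) : ℝ) := by
        intro n; rw [withDensity_apply W measurableSet_Ioo]
      have hmono : Monotone (fun n : ℕ => Ioo (1/(n+2) : ℝ) 1) := by
        intro n m hnm
        apply Ioo_subset_Ioo _ le_rfl
        apply one_div_le_one_div_of_le (by positivity)
        have : (n:ℝ) ≤ m := Nat.cast_le.mpr hnm
        linarith
      have hUnion : (⋃ n : ℕ, Ioo (1/(n+2) : ℝ) 1) = Ioo (0:ℝ) 1 := by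
        ext x
        simp only [mem_iUnion, mem_Ioo]
        constructor
        · rintro ⟨n, h1, h2⟩; exact ⟨lt_trans (by positivity) h1, h2⟩
        · rintro ⟨h1, h2⟩
          obtain ⟨n, hn⟩ := exists_nat_one_div_lt h1
          exact ⟨n, lt_of_le_of_lt (by
            apply one_div_le_one_div_of_le (by positivity)
            push_cast; linarith) hn, h2⟩
      have htop : (⨆ n : ℕ, Hl (1/(n+2) : ℝ)) = ⊤ := by
        have := Directed.measure_iUnion (μ := volume.withDensity W)
          (s := fun n : ℕ => Ioo (1/(n+2) : ℝ) 1) (hmono.directed_le)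
        rw [hUnion] at this
        rw [← funext hnu, ← this, withDensity_apply W measurableSet_Ioo, hdiv]
      obtain ⟨n, hn⟩ := lt_iSup_iff.mp (htop ▸ (ENNReal.ofReal_lt_top : ENNReal.ofReal u < ⊤))
      have hmem : (1/(n+2) : ℝ) ∈ Ioo (0:ℝ) 1 := by
        constructor
        · positivity
        · rw [div_lt_one (by positivity)]; push_cast; linarith
      refine ⟨_, hmem, ?_⟩
      have := ENNReal.toReal_mono (hfin _ hmem) hn.le
      rwa [ENNReal.toReal_ofReal hu.le] at this
    -- the sup
    set S : Set ℝ := {r | r ∈ Ioo (0:ℝ) 1 ∧ u ≤ H r} with hS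
    have hSne : S.Nonempty := ⟨a, haΙ, hau⟩
    have hSbdd : BddAbove S := ⟨1, fun s hs => hs.1.2.le⟩
    set ρ := sSup S with hρ
    have hSleb : ∀ s ∈ S, s ≤ b := by
      intro s hs
      by_contra hsb
      push_neg at hsb
      exact absurd (le_trans hs.2 (hanti b s hbΙ.1 hsb.le hs.1.2)) (not_le.mpr hbu)
    have hρa : a ≤ ρ := le_csSup hSbdd (show a ∈ S from ⟨haΙ, hau⟩)
    have hρb : ρ ≤ b := csSup_le hSne hSleb
    have hρΙ : ρ ∈ Ioo (0:ℝ) 1 := ⟨lt_of_lt_of_le haΙ.1 hρa, lt_of_le_of_lt hρb hbΙ.2⟩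
    -- u ≤ H ρ
    have hge : u ≤ H ρ := by
      apply le_of_forall_pos_le_add
      intro ε hε
      set δ := min (ρ/2) (ε * ρ / 4) with hδ
      have hδpos : 0 < δ := lt_min (by linarith [hρΙ.1]) (by have := mul_pos hε hρΙ.1; linarith)
      obtain ⟨s, hsS, hs⟩ := exists_lt_of_lt_csSup hSne (show ρ - δ < ρ by linarith)
      have hsρ : s ≤ ρ := le_csSup hSbdd hsS
      have hs2 : ρ/2 ≤ s := by
        have : δ ≤ ρ/2 := min_le_left _ _
        linarith
      have hkey := hLip s ρ hsS.1.1 hsρ hρΙ.2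
      have h26 : 2/s * (ρ - s) ≤ ε := by
        have h4 : 2/s ≤ 4/ρ := by
          rw [div_le_div_iff₀ (by linarith [hsS.1.1]) (by linarith [hρΙ.1])]
          linarith
        have h5 : ρ - s ≤ ε * ρ / 4 := le_trans (by linarith) (min_le_right _ _)
        calc 2/s * (ρ - s) ≤ 4/ρ * (ρ - s) :=
              mul_le_mul_of_nonneg_right h4 (by linarith)
          _ ≤ 4/ρ * (ε * ρ / 4) :=
              mul_le_mul_of_nonneg_left h5 (div_nonneg (by norm_num) hρΙ.1.le)
          _ = ε := by
              have hρ0 : ρ ≠ 0 := ne_of_gt hρΙ.1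
              field_simp
      linarith [hsS.2]
    -- H ρ ≤ u
    have hle : H ρ ≤ u := by
      apply le_of_forall_pos_le_add
      intro ε hε
      set δ := min (ε * ρ / 2) ((1 - ρ)/2) with hδ
      have hδpos : 0 < δ := lt_min (by have := mul_pos hε hρΙ.1; linarith) (by linarith [hρΙ.2])
      set r := ρ + δ with hr
      have hr1 : r < 1 := by
        have : δ ≤ (1-ρ)/2 := min_le_right _ _
        simp only [hr]; linarith
      have hrρ : ρ < r := by simp only [hr]; linarith
      have hrS : r ∉ S := fun hrS => absurd (le_csSup hSbdd hrS) (not_le.mpr hrρ)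
      have hrΙ : r ∈ Ioo (0:ℝ) 1 := ⟨by linarith [hρΙ.1], hr1⟩
      have hru : H r < u := by
        by_contra hc
        exact hrS ⟨hrΙ, not_lt.mp hc⟩
      have hkey := hLip ρ r hρΙ.1 hrρ.le hr1
      have : 2/ρ * (r - ρ) ≤ ε := by
        have h5 : r - ρ ≤ ε * ρ / 2 := by
          have h := min_le_left (ε * ρ / 2) ((1 - ρ)/2)
          rw [← hδ] at h
          simp only [hr]
          linarith
        calc 2/ρ * (r - ρ) ≤ 2/ρ * (ε * ρ / 2) :=
              mul_le_mul_of_nonneg_left h5 (div_nonneg (by norm_num) hρΙ.1.le)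
          _ = ε := by
              have hρ0 : ρ ≠ 0 := ne_of_gt hρΙ.1
              field_simp
      linarith
    have hHρ : H ρ = u := le_antisymm hle hge
    have hHlρ : Hl ρ = ENNReal.ofReal u := by
      rw [← hHρ]
      exact (ENNReal.ofReal_toReal (hfin ρ hρΙ)).symm
    -- set comparison
    set T := {r | H r < u} ∩ Ioo (0:ℝ) 1 with hT
    have hsub1 : Ioo ρ 1 ⊆ T := by
      intro r hr
      have hrΙ : r ∈ Ioo (0:ℝ) 1 := ⟨lt_trans hρΙ.1 hr.1, hr.2⟩
      have hrS : r ∉ S := fun hrS => absurd (le_csSup hSbdd hrS) (not_le.mpr hr.1)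
      have : ¬ u ≤ H r := fun hc => hrS ⟨hrΙ, hc⟩
      exact ⟨not_le.mp this, hrΙ⟩
    have hsub2 : T ⊆ Ioo ρ 1 ∪ {ρ} := by
      intro r hr
      rcases lt_trichotomy r ρ with h | h | h
      · exfalso
        obtain ⟨s, hsS, hs⟩ := exists_lt_of_lt_csSup hSne h
        have : u ≤ H r := le_trans hsS.2 (hanti r s hr.2.1 hs.le hsS.1.2)
        exact absurd hr.1 (not_lt.mpr this)
      · exact Or.inr (by simp [h])
      · exact Or.inl ⟨h, hr.2.2⟩
    apply le_antisymm
    · calc ∫⁻ r in T, W r ≤ ∫⁻ r in Ioo ρ 1 ∪ {ρ}, W r := lintegral_mono_set hsub2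
        _ ≤ (∫⁻ r in Ioo ρ 1, W r) + ∫⁻ r in {ρ}, W r := lintegral_union_le _ _ _
        _ = Hl ρ + 0 := by
            rw [setLIntegral_measure_zero _ _ (measure_singleton ρ)]
        _ = ENNReal.ofReal u := by rw [add_zero, hHlρ]
    · calc ENNReal.ofReal u = Hl ρ := hHlρ.symm
        _ = ∫⁻ r in Ioo ρ 1, W r := rfl
        _ ≤ ∫⁻ r in T, W r := lintegral_mono_set hsub1
  -- Tonelli
  set F : ℝ × ℝ → ENNReal := fun p =>
    W p.1 * ({q : ℝ × ℝ | H q.1 < q.2}.indicator (fun q => ENNReal.ofReal (Real.exp (-q.2))) p)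
    with hF
  have hFmeas : Measurable F := by
    apply Measurable.mul (hW.comp measurable_fst)
    apply Measurable.indicator
    · exact (measurable_snd.neg.exp.ennreal_ofReal)
    · exact measurableSet_lt (hHmeas.comp measurable_fst) measurable_snd
  have step1 : ∫⁻ r in Ioo (0:ℝ) 1, W r * ENNReal.ofReal (Real.exp (-(H r)))
      = ∫⁻ r in Ioo (0:ℝ) 1, ∫⁻ u in Ioi (0:ℝ), F (r, u) := by
    apply setLIntegral_congr_fun measurableSet_Ioo
    intro r hr
    have hWne : W r ≠ ⊤ :=
      ne_top_of_le_ne_top ENNReal.ofReal_ne_top (hWle r hr)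
    have hind : ∀ u : ℝ, F (r, u)
        = W r * (Ioi (H r)).indicator (fun u => ENNReal.ofReal (Real.exp (-u))) u := by
      intro u
      by_cases h : H r < u <;>
        simp [hF, Set.indicator_apply, h, mem_Ioi]
    have e1 : ∫⁻ u in Ioi (0:ℝ), (Ioi (H r)).indicator
        (fun u => ENNReal.ofReal (Real.exp (-u))) u = ENNReal.ofReal (Real.exp (-(H r))) := by
      rw [lintegral_indicator measurableSet_Ioi,
        Measure.restrict_restrict measurableSet_Ioi,
        inter_eq_left.mpr (Ioi_subset_Ioi (hH0 r))]
      have hig : IntegrableOn (fun u : ℝ => Real.exp (-u)) (Ioi (H r)) := by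
        have := exp_neg_integrableOn_Ioi (H r) (one_pos (α := ℝ))
        simpa using this
      rw [← ofReal_integral_eq_lintegral_ofReal hig
        (ae_of_all _ fun u => (Real.exp_pos (-u)).le), integral_exp_neg_Ioi]
    calc W r * ENNReal.ofReal (Real.exp (-(H r)))
        = W r * ∫⁻ u in Ioi (0:ℝ), (Ioi (H r)).indicator
            (fun u => ENNReal.ofReal (Real.exp (-u))) u := by rw [e1]
      _ = ∫⁻ u in Ioi (0:ℝ), W r * (Ioi (H r)).indicator
            (fun u => ENNReal.ofReal (Real.exp (-u))) u :=
          (lintegral_const_mul' _ _ hWne).symm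
      _ = ∫⁻ u in Ioi (0:ℝ), F (r, u) := by
          apply lintegral_congr
          intro u
          rw [hind u]
  have step2 : ∫⁻ r in Ioo (0:ℝ) 1, ∫⁻ u in Ioi (0:ℝ), F (r, u)
      = ∫⁻ u in Ioi (0:ℝ), ∫⁻ r in Ioo (0:ℝ) 1, F (r, u) :=
    lintegral_lintegral_swap (hFmeas.aemeasurable)
  have step3 : ∀ u : ℝ, u ∈ Ioi (0:ℝ) → (∫⁻ r in Ioo (0:ℝ) 1, F (r, u))
      = ENNReal.ofReal (Real.exp (-u) * u) := by
    intro u hu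
    have hind : ∀ r : ℝ, F (r, u)
        = ({r : ℝ | H r < u}).indicator (fun r => W r * ENNReal.ofReal (Real.exp (-u))) r := by
      intro r
      by_cases h : H r < u <;>
        simp [hF, Set.indicator_apply, h]
    calc (∫⁻ r in Ioo (0:ℝ) 1, F (r, u))
        = ∫⁻ r in Ioo (0:ℝ) 1,
            ({r : ℝ | H r < u}).indicator (fun r => W r * ENNReal.ofReal (Real.exp (-u))) r := by
          apply lintegral_congr; intro r; rw [hind r]
      _ = ∫⁻ r in {r : ℝ | H r < u} ∩ Ioo (0:ℝ) 1, W r * ENNReal.ofReal (Real.exp (-u)) := by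
          have hms : MeasurableSet {r : ℝ | H r < u} :=
            measurableSet_lt hHmeas measurable_const
          rw [lintegral_indicator hms, Measure.restrict_restrict hms]
      _ = ENNReal.ofReal (Real.exp (-u)) * ∫⁻ r in {r : ℝ | H r < u} ∩ Ioo (0:ℝ) 1, W r := by
          rw [← lintegral_const_mul' _ _ ENNReal.ofReal_ne_top]
          congr 1; funext r; ring
      _ = ENNReal.ofReal (Real.exp (-u)) * ENNReal.ofReal u := by rw [keyval u hu]
      _ = ENNReal.ofReal (Real.exp (-u) * u) :=
          (ENNReal.ofReal_mul (Real.exp_pos (-u)).le).symm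
  have step4 : ∫⁻ u in Ioi (0:ℝ), ENNReal.ofReal (Real.exp (-u) * u) = 1 := by
    have hig : IntegrableOn (fun u : ℝ => Real.exp (-u) * u) (Ioi (0:ℝ)) := by
      have := Real.GammaIntegral_convergent (s := 2) (by norm_num)
      rw [show ((2:ℝ)-1) = 1 by norm_num] at this
      simpa [Real.rpow_one] using this
    rw [← ofReal_integral_eq_lintegral_ofReal hig]
    · have : ∫ u in Ioi (0:ℝ), Real.exp (-u) * u = Real.Gamma 2 := by
        rw [Real.Gamma_eq_integral (by norm_num : (0:ℝ) < 2)]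
        congr 1
        funext u
        rw [show ((2:ℝ)-1) = 1 by norm_num, Real.rpow_one]
      rw [this, Real.Gamma_two, ENNReal.ofReal_one]
    · filter_upwards [ae_restrict_mem measurableSet_Ioi] with u hu
      exact mul_nonneg (Real.exp_pos (-u)).le (le_of_lt hu)
  rw [step1, step2, setLIntegral_congr_fun measurableSet_Ioi step3, step4]


/-- **Radial equality case in exponential integrability**: let `α : (0,1) → [0,1]`
be measurable with `∫₀¹ (1−α(t))/t dt = ∞`, and set `μ(z) = −(z/z̄)α(|z|)` on `𝔻`
(so `|μ(z)| = α(|z|)`). With the Beurling transform given on `𝔻` by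
`Sμ(z) = 2∫_{|z|}^1 α(t)/t dt − α(|z|)`, one has
`∫_𝔻 (1−|μ|)·e^{|μ| + Re Sμ} dz = π`. -/
theorem radial_equality_exponential
    (α : ℝ → ℝ) (hmeas : Measurable α)
    (hrange : ∀ t : ℝ, α t ∈ Icc (0 : ℝ) 1)
    (hdiv : ∫⁻ t in Ioo (0 : ℝ) 1, ENNReal.ofReal ((1 - α t) / t) = ⊤) :
    (∫ z in Metric.ball (0 : ℂ) 1,
        (1 - α (‖z‖)) *
          Real.exp (α (‖z‖) +
            ((2 * ∫ t in Ioo (‖z‖) 1, α t / t) - α (‖z‖)))) =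
      Real.pi := by

  -- lintegral versions of the inner integrals
  set J : ℝ → ENNReal := fun r => ∫⁻ t in Ioo r 1, ENNReal.ofReal (α t / t) with hJ
  set K : ℝ → ENNReal := fun r => ∫⁻ t in Ioo r 1, ENNReal.ofReal ((1 - α t) / t) with hK
  have hJanti : Antitone J := fun a b hab => lintegral_mono_set (Ioo_subset_Ioo hab le_rfl)
  have hKanti : Antitone K := fun a b hab => lintegral_mono_set (Ioo_subset_Ioo hab le_rfl)
  have hJmeas : Measurable J := hJanti.measurable
  have hKmeas : Measurable K := hKanti.measurable
  set W : ℝ → ENNReal := fun t => ENNReal.ofReal (2 * ((1 - α t) / t)) with hWdef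
  have hWmeas : Measurable W :=
    ((measurable_const.sub hmeas).div measurable_id).const_mul 2 |>.ennreal_ofReal
  have hW2K : ∀ r : ℝ, (∫⁻ t in Ioo r 1, W t) = 2 * K r := by
    intro r
    rw [hK]; simp only
    rw [← lintegral_const_mul' 2 _ (by norm_num)]
    apply lintegral_congr
    intro t
    rw [hWdef]; simp only
    rw [ENNReal.ofReal_mul (by norm_num), ENNReal.ofReal_ofNat]
  -- Bochner integral of α t / t equals toReal of J
  have keyJ : ∀ r : ℝ, 0 ≤ r → (∫ t in Ioo r 1, α t / t) = (J r).toReal := by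
    intro r hr
    rw [integral_eq_lintegral_of_nonneg_ae]
    · filter_upwards [ae_restrict_mem measurableSet_Ioo] with t ht
      exact div_nonneg (hrange t).1 (le_of_lt (lt_of_le_of_lt hr ht.1))
    · exact (hmeas.div measurable_id).aestronglyMeasurable
  have keyK : ∀ r : ℝ, 0 ≤ r → (∫ t in Ioo r 1, (1 - α t) / t) = (K r).toReal := by
    intro r hr
    rw [integral_eq_lintegral_of_nonneg_ae]
    · filter_upwards [ae_restrict_mem measurableSet_Ioo] with t ht
      exact div_nonneg (by linarith [(hrange t).2]) (le_of_lt (lt_of_le_of_lt hr ht.1))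
    · exact ((measurable_const.sub hmeas).div measurable_id).aestronglyMeasurable
  set g : ℝ → ℝ := fun r => (1 - α r) * Real.exp (α r + (2 * (J r).toReal - α r)) with hg
  have hgmeas : Measurable g := by
    apply (measurable_const.sub hmeas).mul
    exact (hmeas.add ((hJmeas.ennreal_toReal.const_mul 2).sub hmeas)).exp
  have hgnn : ∀ r, 0 ≤ g r := fun r =>
    mul_nonneg (by linarith [(hrange r).2]) (Real.exp_pos _).le
  -- Step A : replace integrand
  have stepA : (∫ z in Metric.ball (0 : ℂ) 1,
        (1 - α (‖z‖)) *
          Real.exp (α (‖z‖) +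
            ((2 * ∫ t in Ioo (‖z‖) 1, α t / t) - α (‖z‖))))
      = ∫ z in Metric.ball (0 : ℂ) 1, g ‖z‖ := by
    apply setIntegral_congr_fun measurableSet_ball
    intro z _
    rw [hg]; simp only
    rw [keyJ (‖z‖) (norm_nonneg z)]
  -- Step B : to lintegral
  have stepB : (∫ z in Metric.ball (0 : ℂ) 1, g ‖z‖)
      = (∫⁻ z in Metric.ball (0 : ℂ) 1, ENNReal.ofReal (g ‖z‖)).toReal := by
    rw [integral_eq_lintegral_of_nonneg_ae (ae_of_all _ fun z => hgnn ‖z‖)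
      ((hgmeas.comp measurable_norm).aestronglyMeasurable)]
  -- Step C : extend to all of ℂ via indicator
  set ψ : ℝ → ENNReal := (Iio (1:ℝ)).indicator (fun r => ENNReal.ofReal (g r)) with hψ
  have hψmeas : Measurable ψ := (hgmeas.ennreal_ofReal).indicator measurableSet_Iio
  have stepC : (∫⁻ z in Metric.ball (0 : ℂ) 1, ENNReal.ofReal (g ‖z‖)) = ∫⁻ z : ℂ, ψ ‖z‖ := by
    rw [← lintegral_indicator measurableSet_ball]
    apply lintegral_congr
    intro z
    by_cases h : z ∈ Metric.ball (0:ℂ) 1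
    · have hz : ‖z‖ ∈ Iio (1:ℝ) := mem_ball_zero_iff.mp h
      rw [indicator_of_mem h, hψ, indicator_of_mem hz]
    · have hz : ‖z‖ ∉ Iio (1:ℝ) := fun hc => h (mem_ball_zero_iff.mpr hc)
      rw [indicator_of_notMem h, hψ, indicator_of_notMem hz]
  -- Step D : polar coordinates
  have stepD : (∫⁻ z : ℂ, ψ ‖z‖)
      = 2 * (NNReal.pi : ENNReal) * ∫⁻ y in Ioi (0:ℝ), ENNReal.ofReal y * ψ y :=
    lint_norm_complex ψ hψmeas
  -- Step E : reduce to Ioo 0 1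
  have stepE : (∫⁻ y in Ioi (0:ℝ), ENNReal.ofReal y * ψ y)
      = ∫⁻ y in Ioo (0:ℝ) 1, ENNReal.ofReal y * ENNReal.ofReal (g y) := by
    have : ∀ y : ℝ, ENNReal.ofReal y * ψ y
        = (Iio (1:ℝ)).indicator (fun y => ENNReal.ofReal y * ENNReal.ofReal (g y)) y := by
      intro y
      by_cases h : y ∈ Iio (1:ℝ)
      · rw [hψ, indicator_of_mem h, indicator_of_mem h]
      · rw [hψ, indicator_of_notMem h, indicator_of_notMem h, mul_zero]
    rw [lintegral_congr this, lintegral_indicator measurableSet_Iio,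
      Measure.restrict_restrict measurableSet_Iio, Iio_inter_Ioi]
  -- Step F : pointwise identity on Ioo 0 1
  have stepF : (∫⁻ y in Ioo (0:ℝ) 1, ENNReal.ofReal y * ENNReal.ofReal (g y))
      = ∫⁻ y in Ioo (0:ℝ) 1,
          2⁻¹ * (W y * ENNReal.ofReal (Real.exp (-(∫⁻ t in Ioo y 1, W t).toReal))) := by
    apply setLIntegral_congr_fun measurableSet_Ioo
    intro y hy
    beta_reduce
    have hy0 : (0:ℝ) < y := hy.1
    have hKfin : K y ≠ ⊤ := by
      have hb : K y ≤ ENNReal.ofReal (1 / y) * volume (Ioo y 1) := by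
        rw [← setLIntegral_const]
        apply setLIntegral_mono measurable_const
        intro t ht
        apply ENNReal.ofReal_le_ofReal
        exact div_le_div₀ (by norm_num) (by linarith [(hrange t).1]) hy0 ht.1.le
      exact ne_top_of_le_ne_top (ENNReal.mul_ne_top ENNReal.ofReal_ne_top
        (by rw [Real.volume_Ioo]; exact ENNReal.ofReal_ne_top)) hb
    -- the sum identity
    have hm1 : Measurable (fun t : ℝ => α t / t) := hmeas.div measurable_id
    have hm2 : Measurable (fun t : ℝ => (1 - α t) / t) :=
      (measurable_const.sub hmeas).div measurable_id
    have intg1 : IntegrableOn (fun t => α t / t) (Ioo y 1) := by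
      apply Integrable.mono' (integrable_const (1 / y)) hm1.aestronglyMeasurable
      filter_upwards [ae_restrict_mem measurableSet_Ioo] with t ht
      rw [Real.norm_eq_abs, _root_.abs_of_nonneg (div_nonneg (hrange t).1 (by linarith [ht.1]))]
      exact div_le_div₀ (by norm_num) (hrange t).2 hy0 ht.1.le
    have intg2 : IntegrableOn (fun t => (1 - α t) / t) (Ioo y 1) := by
      apply Integrable.mono' (integrable_const (1 / y)) hm2.aestronglyMeasurable
      filter_upwards [ae_restrict_mem measurableSet_Ioo] with t ht
      rw [Real.norm_eq_abs, _root_.abs_of_nonneg (div_nonneg (by linarith [(hrange t).2]) (by linarith [ht.1]))]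
      exact div_le_div₀ (by norm_num) (by linarith [(hrange t).1]) hy0 ht.1.le
    have hsum : (J y).toReal + (K y).toReal = -Real.log y := by
      rw [← keyJ y hy0.le, ← keyK y hy0.le, ← integral_add intg1 intg2]
      have : ∫ t in Ioo y 1, (α t / t + (1 - α t) / t) = ∫ t in Ioo y 1, t⁻¹ := by
        apply setIntegral_congr_fun measurableSet_Ioo
        intro t ht
        have ht0 : t ≠ 0 := ne_of_gt (lt_trans hy0 ht.1)
        field_simp
        ring
      rw [this, ← integral_Ioc_eq_integral_Ioo,
        ← intervalIntegral.integral_of_le hy.2.le, integral_inv_of_pos hy0 one_pos,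
        Real.log_div one_ne_zero (ne_of_gt hy0), Real.log_one]
      ring
    -- exponent rewriting
    have hW2Ky := hW2K y
    have htR : (∫⁻ t in Ioo y 1, W t).toReal = 2 * (K y).toReal := by
      rw [hW2Ky, ENNReal.toReal_mul, ENNReal.toReal_ofNat]
    rw [htR]
    -- now a purely real computation
    have hJt : (J y).toReal = -Real.log y - (K y).toReal := by linarith [hsum]
    rw [← ENNReal.ofReal_mul hy0.le, hg]; simp only
    rw [hJt, hWdef]; simp only
    rw [← ENNReal.ofReal_mul (mul_nonneg (by norm_num : (0:ℝ) ≤ 2)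
        (div_nonneg (by linarith [(hrange y).2]) hy0.le))]
    rw [show ((2:ENNReal))⁻¹ = ENNReal.ofReal 2⁻¹ by
      rw [ENNReal.ofReal_inv_of_pos (by norm_num), ENNReal.ofReal_ofNat]]
    rw [← ENNReal.ofReal_mul (by norm_num : (0:ℝ) ≤ 2⁻¹)]
    congr 1
    set L := Real.log y
    set c := (K y).toReal
    rw [show α y + (2 * (-L - c) - α y) = (-L) + ((-L) + (-(2 * c))) by ring,
      Real.exp_add, Real.exp_add, Real.exp_neg, Real.exp_log hy0]
    field_simp
  -- Step G : hazard identity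
  have hWle : ∀ t ∈ Ioo (0:ℝ) 1, W t ≤ ENNReal.ofReal (2 / t) := by
    intro t ht
    apply ENNReal.ofReal_le_ofReal
    rw [mul_div_assoc']
    exact div_le_div₀ (by norm_num) (by linarith [(hrange t).1]) ht.1 le_rfl
  have hdivW : ∫⁻ t in Ioo (0:ℝ) 1, W t = ⊤ := by
    have : ∫⁻ t in Ioo (0:ℝ) 1, W t
        = 2 * ∫⁻ t in Ioo (0:ℝ) 1, ENNReal.ofReal ((1 - α t) / t) := by
      rw [← lintegral_const_mul' 2 _ (by norm_num)]
      apply lintegral_congr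
      intro t
      rw [hWdef]; simp only
      rw [ENNReal.ofReal_mul (by norm_num), ENNReal.ofReal_ofNat]
    rw [this, hdiv]
    simp
  have stepG : (∫⁻ y in Ioo (0:ℝ) 1,
        2⁻¹ * (W y * ENNReal.ofReal (Real.exp (-(∫⁻ t in Ioo y 1, W t).toReal)))) = 2⁻¹ := by
    rw [lintegral_const_mul' _ _ (by norm_num), hazard_identity W hWmeas hWle hdivW, mul_one]
  -- assemble
  rw [stepA, stepB, stepC, stepD, stepE, stepF, stepG]
  rw [show (2 : ENNReal) * (NNReal.pi : ENNReal) * 2⁻¹ = (NNReal.pi : ENNReal) by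
    rw [mul_comm, ← mul_assoc, ENNReal.inv_mul_cancel (by norm_num) (by norm_num), one_mul]]
  rw [ENNReal.coe_toReal, NNReal.coe_real_pi]
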